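/- Let a(s), b(s) ∈ F[s] be nonzero polynomials of degree at most 1, and let r ∈ {0,1}. If |F| > 2 or r = 0, then there exists p(s) ∈ F[s] of degree at most 1 with normal rank r (i.e., p(s) = 0 if r = 0, p(s) ≠ 0 if r = 1) such that a(s) + p(s) = c·b(s) for some nonzero c ∈ F, if and only if the interlacing condition ψ_{1−r}(s,t) | φ₁(s,t) | ψ_{1+r}(s,t) holds, where φ₁ and ψ₁ are the homogeneous invariant factors of a(s) and b(s). -/
import Mathlib


/-- A polynomial matrix is a (matrix) pencil if every entry has degree at most 1. -/
def IsPencil {F : Type*} [Field F] {m n : ℕ} (M : Matrix (Fin m) (Fin n) (Polynomial F)) : Prop :=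
  ∀ i j, (M i j).degree ≤ 1

/-- Normal rank of a polynomial matrix: its rank over the field of rational functions. -/
noncomputable def normalRank {F : Type*} [Field F] {m n : ℕ}
    (M : Matrix (Fin m) (Fin n) (Polynomial F)) : ℕ :=
  (M.map (algebraMap (Polynomial F) (RatFunc F))).rank

/-- Strict equivalence of polynomial matrices (pencils):
`G = Q * H * R` for invertible constant matrices `Q`, `R`. -/
def StrictEquiv {F : Type*} [Field F] {m n : ℕ}
    (G H : Matrix (Fin m) (Fin n) (Polynomial F)) : Prop :=
  ∃ (Q : Matrix (Fin m) (Fin m) F) (R : Matrix (Fin n) (Fin n) F),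
    IsUnit Q.det ∧ IsUnit R.det ∧ G = (Q.map Polynomial.C) * H * (R.map Polynomial.C)

/-- The pencil `G₀ + s G₁` as a polynomial matrix. -/
noncomputable def pencilOf {F : Type*} [Field F] {m n : ℕ}
    (G₀ G₁ : Matrix (Fin m) (Fin n) F) : Matrix (Fin m) (Fin n) (Polynomial F) :=
  G₀.map Polynomial.C + (Polynomial.X : Polynomial F) • G₁.map Polynomial.C

/-- The homogeneous pencil `t G₀ + s G₁` (variables `s = X 0`, `t = X 1`). -/
noncomputable def homPencil {F : Type*} [Field F] {m n : ℕ}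
    (G₀ G₁ : Matrix (Fin m) (Fin n) F) : Matrix (Fin m) (Fin n) (MvPolynomial (Fin 2) F) :=
  (MvPolynomial.X 1 : MvPolynomial (Fin 2) F) • G₀.map MvPolynomial.C +
    (MvPolynomial.X 0 : MvPolynomial (Fin 2) F) • G₁.map MvPolynomial.C

/-- The set of `k × k` minors of a matrix. -/
def minorsSet {R : Type*} [CommRing R] {m n : ℕ} (M : Matrix (Fin m) (Fin n) R) (k : ℕ) :
    Set R :=
  { d | ∃ (ri : Fin k → Fin m) (ci : Fin k → Fin n),
      Function.Injective ri ∧ Function.Injective ci ∧ d = (M.submatrix ri ci).det }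

/-- `g` is a greatest common divisor of the set `S`. -/
def IsGCDOf {R : Type*} [CommRing R] (g : R) (S : Set R) : Prop :=
  (∀ x ∈ S, g ∣ x) ∧ ∀ d : R, (∀ x ∈ S, d ∣ x) → d ∣ g

/-- `φ 0, …, φ (n-1)` are homogeneous invariant factors (up to units) of the pencil
`G₀ + s G₁`: for each `k ≤ n` the product of the first `k` of them is a gcd of the
`k × k` minors of the homogeneous pencil `t G₀ + s G₁`. -/
def IsHomogeneousIF {F : Type*} [Field F] {n : ℕ} (G₀ G₁ : Matrix (Fin n) (Fin n) F)
    (φ : ℕ → MvPolynomial (Fin 2) F) : Prop :=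
  ∀ k : ℕ, k ≤ n → IsGCDOf (∏ i ∈ Finset.range k, φ i) (minorsSet (homPencil G₀ G₁) k)

/-- Extension of a finite family of invariant factors (indexed `1, …, n`, stored with
offset `1` so that `φ 0` is the first one) to all integer indices, with the convention
that it is `1` below the range and `0` above it. -/
def extIF {R : Type*} [CommRing R] (n : ℕ) (φ : ℕ → R) : ℤ → R :=
  fun j => if j < 1 then 1 else if (n : ℤ) < j then 0 else φ (j - 1).toNat

/-- Interlacing condition `φ_{i-r} ∣ ψ_i ∣ φ_{i+r}`, `1 ≤ i ≤ n`. -/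
def Interlace {R : Type*} [CommRing R] (n r : ℕ) (φ ψ : ℕ → R) : Prop :=
  ∀ i : ℕ, 1 ≤ i → i ≤ n →
    extIF n φ ((i : ℤ) - r) ∣ extIF n ψ (i : ℤ) ∧
      extIF n ψ (i : ℤ) ∣ extIF n φ ((i : ℤ) + r)

/-- The operation `P_X` on pencils, acting on the pair `(G₀, G₁)` of coefficients of
`G(s) = G₀ + s G₁`: for `X = [[x, y], [z, w]]`,
`P_X(s G₁ + G₀) = s (x G₁ + z G₀) + (y G₁ + w G₀)`. -/
def mapP {F : Type*} [Field F] {m n : ℕ} (X : Matrix (Fin 2) (Fin 2) F)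
    (G : Matrix (Fin m) (Fin n) F × Matrix (Fin m) (Fin n) F) :
    Matrix (Fin m) (Fin n) F × Matrix (Fin m) (Fin n) F :=
  (X 0 1 • G.2 + X 1 1 • G.1, X 0 0 • G.2 + X 1 0 • G.1)

/-- The substitution `Π_X(Φ)(s, t) = Φ(s x + t y, s z + t w)` for `X = [[x, y], [z, w]]`. -/
noncomputable def PiX {F : Type*} [Field F] (X : Matrix (Fin 2) (Fin 2) F)
    (Φ : MvPolynomial (Fin 2) F) : MvPolynomial (Fin 2) F :=
  MvPolynomial.aeval
    ![MvPolynomial.C (X 0 0) * MvPolynomial.X 0 + MvPolynomial.C (X 0 1) * MvPolynomial.X 1,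
      MvPolynomial.C (X 1 0) * MvPolynomial.X 0 + MvPolynomial.C (X 1 1) * MvPolynomial.X 1] Φ

/-- The homogeneous invariant factor of a nonzero `1 × 1` pencil `a(s) = a₀ + s a₁`:
the homogenization `t a₀ + s a₁`, made monic with respect to `s`
(equal to `t` when `a₁ = 0`). -/
noncomputable def homIF1 {F : Type*} [Field F] (a : Polynomial F) : MvPolynomial (Fin 2) F :=
  MvPolynomial.C (a.leadingCoeff)⁻¹ *
    (MvPolynomial.C (a.coeff 1) * MvPolynomial.X 0 + MvPolynomial.C (a.coeff 0) * MvPolynomial.X 1)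

/-- The homogeneous pencil associated to a polynomial matrix pencil. -/
noncomputable def homOf {F : Type*} [Field F] {n : ℕ}
    (M : Matrix (Fin n) (Fin n) (Polynomial F)) : Matrix (Fin n) (Fin n) (MvPolynomial (Fin 2) F) :=
  homPencil (M.map fun p => p.coeff 0) (M.map fun p => p.coeff 1)

/-- `1 × 1` case: for nonzero pencils `a(s)`, `b(s)` and `r ∈ {0,1}`, if
`|F| > 2` or `r = 0`, there exists a `1 × 1` pencil `p(s)` of normal rank `r` with
`a(s) + p(s)` strictly equivalent to `b(s)` iff `ψ_{1-r} ∣ φ₁ ∣ ψ_{1+r}`. -/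

lemma aeval_homIF1 {F : Type*} [Field F] (a : Polynomial F) (hda : a.degree ≤ 1) :
    MvPolynomial.aeval ![(Polynomial.X : Polynomial F), 1] (homIF1 a)
      = Polynomial.C (a.leadingCoeff)⁻¹ * a := by
  set L := a.leadingCoeff with hL
  conv_rhs => rw [Polynomial.eq_X_add_C_of_degree_le_one hda]
  simp only [homIF1, ← hL, map_mul, map_add, MvPolynomial.aeval_C, MvPolynomial.aeval_X,
    Matrix.cons_val_zero, Matrix.cons_val_one, Matrix.head_cons, Polynomial.algebraMap_eq]
  ring

lemma homIF1_C_mul {F : Type*} [Field F] (c : F) (hc : c ≠ 0) (b : Polynomial F) :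
    homIF1 (Polynomial.C c * b) = homIF1 b := by
  unfold homIF1
  rw [Polynomial.leadingCoeff_mul, Polynomial.leadingCoeff_C,
      Polynomial.coeff_C_mul, Polynomial.coeff_C_mul, mul_inv]
  simp only [map_mul]
  have h1 : (MvPolynomial.C c⁻¹ : MvPolynomial (Fin 2) F) * MvPolynomial.C c = 1 := by
    rw [← map_mul, inv_mul_cancel₀ hc, map_one]
  linear_combination (MvPolynomial.C (b.leadingCoeff)⁻¹ *
    (MvPolynomial.C (b.coeff 1) * MvPolynomial.X 0 +
      MvPolynomial.C (b.coeff 0) * MvPolynomial.X 1)) * h1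

theorem stmt12 (F : Type*) [Field F] (a b : Polynomial F) (ha : a ≠ 0) (hb : b ≠ 0)
    (hda : a.degree ≤ 1) (hdb : b.degree ≤ 1) (r : ℕ) (hr : r ≤ 1)
    (hF : 2 < Cardinal.mk F ∨ r = 0) :
    (∃ p : Polynomial F, p.degree ≤ 1 ∧ (r = 0 → p = 0) ∧ (r = 1 → p ≠ 0) ∧
        ∃ c : F, c ≠ 0 ∧ a + p = Polynomial.C c * b) ↔
      Interlace 1 r (fun _ => homIF1 b) (fun _ => homIF1 a) := by
  interval_cases r
  · -- r = 0
    constructor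
    · rintro ⟨p, hp, h0, -, c, hc, hab⟩
      have hp0 := h0 rfl
      subst hp0
      rw [add_zero] at hab
      subst hab
      have key : homIF1 (Polynomial.C c * b) = homIF1 b := homIF1_C_mul c hc b
      intro i hi1 hi2
      have hi : i = 1 := le_antisymm hi2 hi1
      subst hi
      norm_num [extIF, key]
    · intro h
      obtain ⟨h1, h2⟩ := h 1 le_rfl le_rfl
      norm_num [extIF] at h1 h2
      have d1 : b ∣ a := by
        have hd := map_dvd (MvPolynomial.aeval (R := F) ![(Polynomial.X : Polynomial F), 1]) h1
        rw [aeval_homIF1 a hda, aeval_homIF1 b hdb] at hd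
        refine (dvd_mul_left b _).trans (hd.trans ⟨Polynomial.C a.leadingCoeff, ?_⟩)
        rw [mul_comm, ← mul_assoc, ← Polynomial.C_mul,
          mul_inv_cancel₀ (Polynomial.leadingCoeff_ne_zero.mpr ha), Polynomial.C_1, one_mul]
      have d2 : a ∣ b := by
        have hd := map_dvd (MvPolynomial.aeval (R := F) ![(Polynomial.X : Polynomial F), 1]) h2
        rw [aeval_homIF1 a hda, aeval_homIF1 b hdb] at hd
        refine (dvd_mul_left a _).trans (hd.trans ⟨Polynomial.C b.leadingCoeff, ?_⟩)
        rw [mul_comm, ← mul_assoc, ← Polynomial.C_mul,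
          mul_inv_cancel₀ (Polynomial.leadingCoeff_ne_zero.mpr hb), Polynomial.C_1, one_mul]
      obtain ⟨u, hu⟩ := associated_of_dvd_dvd d1 d2
      obtain ⟨c, hcu, hcC⟩ := Polynomial.isUnit_iff.mp u.isUnit
      refine ⟨0, by simp, fun _ => rfl, by simp, c, hcu.ne_zero, ?_⟩
      rw [add_zero, ← hu, ← hcC, mul_comm]
  · -- r = 1
    constructor
    · intro _
      intro i hi1 hi2
      have hi : i = 1 := le_antisymm hi2 hi1
      subst hi
      refine ⟨?_, ?_⟩ <;> norm_num [extIF]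
    · intro _
      classical
      have hF' : 2 < Cardinal.mk F := by
        rcases hF with h | h
        · exact h
        · exact absurd h one_ne_zero
      have h3 : (3 : Cardinal) ≤ Cardinal.mk F := by
        have hs := Order.succ_le_of_lt hF'
        have h2 : (Order.succ (2 : Cardinal)) = 3 := by
          rw [show (2 : Cardinal) = ((2 : ℕ) : Cardinal) by norm_cast, ← Cardinal.nat_succ]
          norm_cast
        rwa [h2] at hs
      obtain ⟨x, hx0, hx1⟩ := Cardinal.three_le h3 0 1
      have hchoice : ∃ c : F, c ≠ 0 ∧ Polynomial.C c * b ≠ a := by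
        by_cases h1 : Polynomial.C (1 : F) * b = a
        · refine ⟨x, hx0, fun hxb => hx1 ?_⟩
          have : Polynomial.C x * b = Polynomial.C (1:F) * b := by rw [hxb, h1]
          have := mul_right_cancel₀ hb this
          exact Polynomial.C_injective this
        · exact ⟨1, one_ne_zero, h1⟩
      obtain ⟨c, hc0, hcb⟩ := hchoice
      refine ⟨Polynomial.C c * b - a, ?_, by simp, fun _ => sub_ne_zero.mpr hcb, c, hc0, by ring⟩
      refine (Polynomial.degree_sub_le _ _).trans (max_le ?_ hda)
      refine (Polynomial.degree_mul_le _ _).trans ?_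
      calc (Polynomial.C c).degree + b.degree ≤ 0 + 1 := add_le_add Polynomial.degree_C_le hdb
        _ = 1 := by norm_num
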